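/- Fix c > 0 and L̄ > 1, L = L̄·log₂ n, K = c·n/L. Let K′ be the number of islands (equivalently, the number of reads whose successor read starts more than L positions later on the circle) formed by K reads of length L with independent uniform starting positions on a circular length-n string. Then for every ε > 0, P(|K′ − K·e^{−c}| ≥ ε·K·e^{−c}) → 0 as n → ∞. -/

import Mathlib

open MeasureTheory ProbabilityTheory Real Filter

namespace Stmt13

lemma card_val_filter {n : ℕ} (P : ℕ → Prop) [DecidablePred P] :
    (Finset.univ.filter fun d : Fin n => P d.val).card
      = ((Finset.range n).filter P).card := by
  refine Finset.card_bij (fun d _ => d.val) ?_ ?_ ?_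
  · intro a ha; simp only [Finset.mem_filter, Finset.mem_range, Finset.mem_univ, true_and] at ha ⊢
    exact ⟨a.isLt, ha⟩
  · intro a _ b _ h; exact Fin.val_injective h
  · intro b hb; simp only [Finset.mem_filter, Finset.mem_range] at hb
    exact ⟨⟨b, hb.1⟩, by simp [hb.2], rfl⟩

lemma card_shift {n : ℕ} [NeZero n] (t : Fin n) (P : Fin n → Prop) [DecidablePred P] :
    (Finset.univ.filter fun x : Fin n => P (x - t)).card
      = (Finset.univ.filter P).card := by
  refine Finset.card_bij' (fun x _ => x - t) (fun d _ => d + t) ?_ ?_ ?_ ?_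
  · intro a ha; simp only [Finset.mem_filter, Finset.mem_univ, true_and] at ha ⊢; exact ha
  · intro a ha; simp only [Finset.mem_filter, Finset.mem_univ, true_and] at ha ⊢
    simpa using ha
  · intro a _; simp
  · intro a _; simp

lemma card_arc {n L : ℕ} [NeZero n] (hLn : L ≤ n) (t : Fin n) :
    (Finset.univ.filter fun x : Fin n => ((x - t : Fin n)).val < L).card = L := by
  rw [card_shift t (fun d => d.val < L), card_val_filter (fun v => v < L)]
  have : (Finset.range n).filter (fun v => v < L) = Finset.range L := by
    ext v; simp only [Finset.mem_filter, Finset.mem_range]; omega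
  rw [this, Finset.card_range]

lemma card_pair_cond {n L : ℕ} [NeZero n] (hL : 0 < L) (h2L : 2 * L ≤ n) (s : Fin n) :
    (Finset.univ.filter fun t : Fin n =>
      L ≤ ((t - s : Fin n)).val ∧ L ≤ ((s - t : Fin n)).val).card = n - 2 * L + 1 := by
  have hrw : ∀ t : Fin n, (s - t : Fin n) = -(t - s) := by intro t; abel
  have key : (Finset.univ.filter fun t : Fin n =>
      L ≤ ((t - s : Fin n)).val ∧ L ≤ ((s - t : Fin n)).val).card
      = (Finset.univ.filter fun d : Fin n => L ≤ d.val ∧ L ≤ ((-d : Fin n)).val).card := by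
    simp_rw [hrw]
    exact card_shift s (fun d => L ≤ d.val ∧ L ≤ ((-d : Fin n)).val)
  rw [key]
  have hneg : ∀ d : Fin n, ((-d : Fin n)).val = (n - d.val) % n := fun d => rfl
  simp_rw [hneg]
  rw [card_val_filter (fun v => L ≤ v ∧ L ≤ (n - v) % n)]
  have hn : 0 < n := Nat.pos_of_ne_zero (NeZero.ne n)
  have : (Finset.range n).filter (fun v => L ≤ v ∧ L ≤ (n - v) % n)
      = Finset.Icc L (n - L) := by
    ext v
    simp only [Finset.mem_filter, Finset.mem_range, Finset.mem_Icc]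
    constructor
    · rintro ⟨hv, h1, h2⟩
      have hv0 : 0 < v := lt_of_lt_of_le hL h1
      have : (n - v) % n = n - v := Nat.mod_eq_of_lt (by omega)
      omega
    · rintro ⟨h1, h2⟩
      have hv0 : 0 < v := lt_of_lt_of_le hL h1
      have hvn : v < n := by omega
      have : (n - v) % n = n - v := Nat.mod_eq_of_lt (by omega)
      refine ⟨hvn, h1, ?_⟩; omega
  rw [this, Nat.card_Icc]; omega

lemma arcs_disjoint {n L : ℕ} [NeZero n] {s t : Fin n}
    (h1 : L ≤ ((t - s : Fin n)).val) (h2 : L ≤ ((s - t : Fin n)).val) :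
    Disjoint (Finset.univ.filter fun x : Fin n => ((x - s : Fin n)).val < L)
      (Finset.univ.filter fun x : Fin n => ((x - t : Fin n)).val < L) := by
  rw [Finset.disjoint_left]
  intro x hx1 hx2
  simp only [Finset.mem_filter, Finset.mem_univ, true_and] at hx1 hx2
  rcases le_total ((x - t : Fin n)).val ((x - s : Fin n)).val with h | h
  · have he : (t - s : Fin n) = (x - s) - (x - t) := by abel
    have : ((t - s : Fin n)).val = ((x - s : Fin n)).val - ((x - t : Fin n)).val := by
      rw [he, Fin.sub_val_of_le (by exact h)]
    omega
  · have he : (s - t : Fin n) = (x - t) - (x - s) := by abel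
    have : ((s - t : Fin n)).val = ((x - t : Fin n)).val - ((x - s : Fin n)).val := by
      rw [he, Fin.sub_val_of_le (by exact h)]
    omega

lemma card_pair_free {n L : ℕ} [NeZero n] (hL : 0 < L) (h2L : 2 * L ≤ n) {s t : Fin n}
    (h1 : L ≤ ((t - s : Fin n)).val) (h2 : L ≤ ((s - t : Fin n)).val) :
    (Finset.univ.filter fun x : Fin n =>
      ¬ ((x - s : Fin n)).val < L ∧ ¬ ((x - t : Fin n)).val < L).card = n - 2 * L := by
  have hLn : L ≤ n := by omega
  have hrw : (Finset.univ.filter fun x : Fin n =>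
      ¬ ((x - s : Fin n)).val < L ∧ ¬ ((x - t : Fin n)).val < L)
      = Finset.univ \ ((Finset.univ.filter fun x : Fin n => ((x - s : Fin n)).val < L)
        ∪ (Finset.univ.filter fun x : Fin n => ((x - t : Fin n)).val < L)) := by
    ext x
    simp only [Finset.mem_filter, Finset.mem_univ, true_and, Finset.mem_sdiff,
      Finset.mem_union, not_or]
  rw [hrw, Finset.card_sdiff_of_subset (Finset.subset_univ _),
    Finset.card_union_of_disjoint (arcs_disjoint h1 h2), card_arc hLn, card_arc hLn,
    Finset.card_univ, Fintype.card_fin]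
  omega


variable {Ωn : Type} [MeasurableSpace Ωn] {μ : Measure Ωn} [IsProbabilityMeasure μ]
variable {n K L : ℕ}

/-- probability that T k lands in a finite set -/
lemma meas_mem_finset (T : Fin K → Ωn → Fin n) (hmeas : ∀ k, Measurable (T k))
    (hunif : ∀ k (t : Fin n), μ {ω | T k ω = t} = (n : ENNReal)⁻¹)
    (k : Fin K) (B : Finset (Fin n)) :
    μ {ω | T k ω ∈ B} = (B.card : ENNReal) * (n : ENNReal)⁻¹ := by
  have hrw : {ω | T k ω ∈ B} = ⋃ t ∈ B, {ω | T k ω = t} := by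
    ext ω; simp
  rw [hrw, measure_biUnion_finset ?_ ?_]
  · simp [hunif k]
  · intro s _ t _ hst
    simp only [Function.onFun]
    refine Set.disjoint_left.2 fun ω h1 h2 => hst ?_
    simp only [Set.mem_setOf_eq] at h1 h2; rw [← h1, h2]
  · intro t _
    exact (hmeas k) (measurableSet_singleton t)

lemma meas_cylinder (T : Fin K → Ωn → Fin n) (hmeas : ∀ k, Measurable (T k))
    (hunif : ∀ k (t : Fin n), μ {ω | T k ω = t} = (n : ENNReal)⁻¹)
    (hind : iIndepFun T μ) (B : Fin K → Finset (Fin n)) :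
    μ (⋂ k, {ω | T k ω ∈ B k}) = ∏ k, ((B k).card : ENNReal) * (n : ENNReal)⁻¹ := by
  rw [hind.meas_iInter]
  · exact Finset.prod_congr rfl fun k _ => meas_mem_finset T hmeas hunif k (B k)
  · intro k
    exact ⟨(B k : Set (Fin n)), by measurability, rfl⟩


/-- The island event for read k. -/
def A (T : Fin K → Ωn → Fin n) (L : ℕ) (k : Fin K) : Set Ωn :=
  {ω | ∀ k', k' ≠ k → ¬ ((T k' ω - T k ω : Fin n)).val < L}

lemma measurableSet_A (T : Fin K → Ωn → Fin n) (hmeas : ∀ k, Measurable (T k)) (k : Fin K) :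
    MeasurableSet (A T L k) := by
  have : A T L k = ⋂ k', {ω | k' ≠ k → ¬ ((T k' ω - T k ω : Fin n)).val < L} := by
    ext ω; simp [A]
  rw [this]
  refine MeasurableSet.iInter fun k' => ?_
  by_cases h : k' = k
  · simp [h]
  · have : {ω | k' ≠ k → ¬ ((T k' ω - T k ω : Fin n)).val < L}
        = (fun ω => (T k' ω, T k ω)) ⁻¹' {p : Fin n × Fin n | ¬ ((p.1 - p.2 : Fin n)).val < L} := by
      ext ω; simp [h]
    rw [this]
    exact ((hmeas k').prodMk (hmeas k)) (by measurability)

lemma meas_A (hn : 0 < n) (hL : 0 < L) (hLn : L ≤ n)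
    (T : Fin K → Ωn → Fin n) (hmeas : ∀ k, Measurable (T k))
    (hunif : ∀ k (t : Fin n), μ {ω | T k ω = t} = (n : ENNReal)⁻¹)
    (hind : iIndepFun T μ) (k : Fin K) :
    μ (A T L k) = (((n - L : ℕ) : ENNReal) * (n : ENNReal)⁻¹) ^ (K - 1) := by
  haveI : NeZero n := ⟨hn.ne'⟩
  classical
  set C : Fin n → Finset (Fin n) :=
    fun t => Finset.univ.filter (fun x : Fin n => ¬ ((x - t : Fin n)).val < L) with hC
  set B : Fin n → Fin K → Finset (Fin n) :=
    fun t m => if m = k then {t} else C t with hB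
  have hsplit : A T L k = ⋃ t : Fin n, ⋂ m, {ω | T m ω ∈ B t m} := by
    ext ω
    simp only [A, Set.mem_setOf_eq, Set.mem_iUnion, Set.mem_iInter]
    constructor
    · intro h
      refine ⟨T k ω, fun m => ?_⟩
      by_cases hm : m = k
      · simp [hB, hm]
      · simp only [hB, hC, if_neg hm, Finset.mem_filter, Finset.mem_univ, true_and,
          Set.mem_setOf_eq]
        exact h m hm
    · rintro ⟨t, ht⟩ k' hk'
      have hk : T k ω = t := by have := ht k; simpa [hB] using this
      have := ht k'
      simp only [hB, hC, if_neg hk', Finset.mem_filter, Finset.mem_univ, true_and,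
        Set.mem_setOf_eq] at this
      rwa [hk]
  rw [hsplit, measure_iUnion ?_ ?_]
  · have hterm : ∀ t : Fin n, μ (⋂ m, {ω | T m ω ∈ B t m})
        = (n : ENNReal)⁻¹ * ((((n - L : ℕ)) : ENNReal) * (n : ENNReal)⁻¹) ^ (K - 1) := by
      intro t
      rw [meas_cylinder T hmeas hunif hind (B t)]
      have hCcard : (C t).card = n - L := by
        have : (C t).card = n - (Finset.univ.filter
            (fun x : Fin n => ((x - t : Fin n)).val < L)).card := by
          rw [hC]
          simp only [Finset.filter_not, Finset.card_sdiff_of_subset (Finset.filter_subset _ _),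
            Finset.card_univ, Fintype.card_fin]
        rw [this, card_arc hLn]
      rw [← Finset.mul_prod_erase Finset.univ _ (Finset.mem_univ k)]
      have h1 : (((B t k).card : ENNReal)) * (n : ENNReal)⁻¹ = (n : ENNReal)⁻¹ := by
        simp [hB]
      rw [h1]
      congr 1
      rw [Finset.prod_congr rfl (fun m hm => ?_), Finset.prod_const,
        Finset.card_erase_of_mem (Finset.mem_univ k), Finset.card_univ, Fintype.card_fin]
      have hm' : m ≠ k := Finset.ne_of_mem_erase hm
      rw [hB]; simp only [if_neg hm', hCcard]
    simp only [hterm, Finset.sum_const, Finset.card_univ, Fintype.card_fin, tsum_fintype]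
    rw [nsmul_eq_mul, ← mul_assoc, ENNReal.mul_inv_cancel (by simpa using hn.ne') (by simp),
      one_mul]
  · intro s t hst
    simp only [Function.onFun]
    refine Set.disjoint_left.2 fun ω h1 h2 => hst ?_
    simp only [Set.mem_iInter] at h1 h2
    have e1 := h1 k; have e2 := h2 k
    simp only [hB, if_pos rfl, Set.mem_setOf_eq, Finset.mem_singleton] at e1 e2
    rw [← e1, ← e2]
  · intro t
    refine MeasurableSet.iInter fun m => ?_
    exact (hmeas m) (by measurability)



lemma meas_AA (hn : 0 < n) (hL : 0 < L) (h2L : 2 * L ≤ n)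
    (T : Fin K → Ωn → Fin n) (hmeas : ∀ k, Measurable (T k))
    (hunif : ∀ k (t : Fin n), μ {ω | T k ω = t} = (n : ENNReal)⁻¹)
    (hind : iIndepFun T μ) {j k : Fin K} (hjk : j ≠ k) :
    μ (A T L j ∩ A T L k) = ((n : ENNReal) * ((n - 2 * L + 1 : ℕ) : ENNReal))
      * ((n : ENNReal)⁻¹ * (n : ENNReal)⁻¹
        * (((n - 2 * L : ℕ) : ENNReal) * (n : ENNReal)⁻¹) ^ (K - 2)) := by
  haveI : NeZero n := ⟨hn.ne'⟩
  classical
  set P : Finset (Fin n × Fin n) := Finset.univ.filter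
    (fun st : Fin n × Fin n => L ≤ ((st.2 - st.1 : Fin n)).val ∧ L ≤ ((st.1 - st.2 : Fin n)).val)
    with hP
  set D : Fin n × Fin n → Finset (Fin n) := fun st =>
    Finset.univ.filter (fun x : Fin n =>
      ¬ ((x - st.1 : Fin n)).val < L ∧ ¬ ((x - st.2 : Fin n)).val < L) with hD
  set B : Fin n × Fin n → Fin K → Finset (Fin n) :=
    fun st m => if m = j then {st.1} else if m = k then {st.2} else D st with hB
  have hsplit : A T L j ∩ A T L k = ⋃ st ∈ P, ⋂ m, {ω | T m ω ∈ B st m} := by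
    ext ω
    simp only [A, Set.mem_inter_iff, Set.mem_setOf_eq, Set.mem_iUnion, Set.mem_iInter]
    constructor
    · rintro ⟨h1, h2⟩
      refine ⟨(T j ω, T k ω), ?_, fun m => ?_⟩
      · simp only [hP, Finset.mem_filter, Finset.mem_univ, true_and]
        exact ⟨not_lt.1 (h1 k (Ne.symm hjk)), not_lt.1 (h2 j hjk)⟩
      · by_cases hmj : m = j
        · simp [hB, hmj]
        · by_cases hmk : m = k
          · simp [hB, hmk, if_neg (by simpa [hmk] using (Ne.symm hjk))]
          · simp only [hB, hD, if_neg hmj, if_neg hmk, Finset.mem_filter, Finset.mem_univ,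
              true_and, Set.mem_setOf_eq]
            exact ⟨h1 m hmj, h2 m hmk⟩
    · rintro ⟨st, hst, hm⟩
      simp only [hP, Finset.mem_filter, Finset.mem_univ, true_and] at hst
      have hj : T j ω = st.1 := by have := hm j; simpa [hB] using this
      have hk : T k ω = st.2 := by
        have := hm k; simpa [hB, if_neg (Ne.symm hjk)] using this
      constructor
      · intro k' hk'
        by_cases hk'k : k' = k
        · subst hk'k; rw [hk, hj]; omega
        · have := hm k'
          simp only [hB, hD, if_neg hk', if_neg hk'k, Finset.mem_filter, Finset.mem_univ,
            true_and, Set.mem_setOf_eq] at this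
          rw [hj]; exact this.1
      · intro k' hk'
        by_cases hk'j : k' = j
        · subst hk'j; rw [hk, hj]; omega
        · have := hm k'
          simp only [hB, hD, if_neg hk'j, if_neg hk', Finset.mem_filter, Finset.mem_univ,
            true_and, Set.mem_setOf_eq] at this
          rw [hk]; exact this.2
  rw [hsplit, measure_biUnion_finset ?_ ?_]
  · have hterm : ∀ st ∈ P, μ (⋂ m, {ω | T m ω ∈ B st m})
        = (n : ENNReal)⁻¹ * (n : ENNReal)⁻¹
          * (((n - 2 * L : ℕ) : ENNReal) * (n : ENNReal)⁻¹) ^ (K - 2) := by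
      intro st hst
      simp only [hP, Finset.mem_filter, Finset.mem_univ, true_and] at hst
      rw [meas_cylinder T hmeas hunif hind (B st)]
      have hDcard : (D st).card = n - 2 * L := card_pair_free hL h2L hst.1 hst.2
      rw [← Finset.mul_prod_erase Finset.univ _ (Finset.mem_univ j)]
      have h1 : (((B st j).card : ENNReal)) * (n : ENNReal)⁻¹ = (n : ENNReal)⁻¹ := by simp [hB]
      rw [h1]
      rw [← Finset.mul_prod_erase (Finset.univ.erase j) _
        (Finset.mem_erase.2 ⟨Ne.symm hjk, Finset.mem_univ k⟩)]
      have h2 : (((B st k).card : ENNReal)) * (n : ENNReal)⁻¹ = (n : ENNReal)⁻¹ := by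
        simp [hB, if_neg (Ne.symm hjk)]
      rw [h2]
      have hprod : ∀ m ∈ (Finset.univ.erase j).erase k,
          ((B st m).card : ENNReal) * (n : ENNReal)⁻¹
            = ((n - 2 * L : ℕ) : ENNReal) * (n : ENNReal)⁻¹ := by
        intro m hm
        have hmk : m ≠ k := Finset.ne_of_mem_erase hm
        have hmj : m ≠ j := Finset.ne_of_mem_erase (Finset.mem_of_mem_erase hm)
        rw [hB]; simp only [if_neg hmj, if_neg hmk, hDcard]
      rw [Finset.prod_congr rfl hprod, Finset.prod_const,
        Finset.card_erase_of_mem (Finset.mem_erase.2 ⟨Ne.symm hjk, Finset.mem_univ k⟩),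
        Finset.card_erase_of_mem (Finset.mem_univ j), Finset.card_univ, Fintype.card_fin,
        Nat.sub_sub]
      ring
    rw [Finset.sum_congr rfl hterm, Finset.sum_const]
    have hfiber : ∀ s : Fin n, (P.filter fun st => st.1 = s).card = n - 2 * L + 1 := by
      intro s
      rw [← card_pair_cond hL h2L s]
      refine Finset.card_bij (fun st _ => st.2) ?_ ?_ ?_
      · intro st hst
        simp only [hP, Finset.mem_filter, Finset.mem_univ, true_and] at hst ⊢
        rcases hst with ⟨⟨ha, hb⟩, hc⟩
        rw [hc] at ha hb; exact ⟨ha, hb⟩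
      · intro st hst st' hst' h
        simp only [hP, Finset.mem_filter, Finset.mem_univ, true_and] at hst hst'
        exact Prod.ext (hst.2.trans hst'.2.symm) h
      · intro t ht
        simp only [Finset.mem_filter, Finset.mem_univ, true_and] at ht
        refine ⟨(s, t), ?_, rfl⟩
        simp only [hP, Finset.mem_filter, Finset.mem_univ, true_and]
        exact ⟨⟨ht.1, ht.2⟩, by trivial⟩
    have hcardP : P.card = n * (n - 2 * L + 1) := by
      rw [Finset.card_eq_sum_card_fiberwise
        (fun st _ => Finset.mem_univ st.1 : ∀ st ∈ P, st.1 ∈ Finset.univ)]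
      simp only [hfiber, Finset.sum_const, Finset.card_univ, Fintype.card_fin, smul_eq_mul]
    rw [hcardP, nsmul_eq_mul]
    push_cast
    ring
  · intro s hs t ht hst
    simp only [Function.onFun]
    refine Set.disjoint_left.2 fun ω h1 h2 => hst ?_
    simp only [Set.mem_iInter] at h1 h2
    have e1j := h1 j; have e2j := h2 j
    have e1k := h1 k; have e2k := h2 k
    simp [hB, Ne.symm hjk] at e1j e2j e1k e2k
    have : s = t := Prod.ext (by rw [← e1j, ← e2j]) (by rw [← e1k, ← e2k])
    exact this
  · intro st _
    exact MeasurableSet.iInter fun m => (hmeas m) (by measurability)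


lemma core (hn : 0 < n) (hL : 0 < L) (h2L : 2 * L ≤ n) (hK : 2 ≤ K)
    (T : Fin K → Ωn → Fin n) (hmeas : ∀ k, Measurable (T k))
    (hunif : ∀ k (t : Fin n), μ {ω | T k ω = t} = (n : ENNReal)⁻¹)
    (hind : iIndepFun T μ)
    (a : ℝ) (ha : 0 < a) :
    μ {ω | a ≤ |((Finset.univ.filter (fun k =>
        ∀ k', k' ≠ k → ¬ ((T k' ω - T k ω : Fin n)).val < L)).card : ℝ)
        - (K : ℝ) * (((n : ℝ) - L) / n) ^ (K - 1)|}
      ≤ ENNReal.ofReal (((K : ℝ) + (K : ℝ) ^ 2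
          * |((n : ℝ) - 2 * L + 1) / n * (((n : ℝ) - 2 * L) / n) ^ (K - 2)
            - ((((n : ℝ) - L) / n) ^ (K - 1)) ^ 2|) / a ^ 2) := by
  classical
  have hLn : L ≤ n := by omega
  have hn' : (n : ℝ) ≠ 0 := Nat.cast_ne_zero.2 hn.ne'
  set pr : ℝ := (((n : ℝ) - L) / n) ^ (K - 1) with hpr
  set qr : ℝ := ((n : ℝ) - 2 * L + 1) / n * (((n : ℝ) - 2 * L) / n) ^ (K - 2) with hqr
  set S : Ωn → ℝ := fun ω => ((Finset.univ.filter (fun k =>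
      ∀ k', k' ≠ k → ¬ ((T k' ω - T k ω : Fin n)).val < L)).card : ℝ) with hS
  have hS_eq : S = fun ω => ∑ k, Set.indicator (A T L k) (fun _ => (1:ℝ)) ω := by
    funext ω
    simp only [hS]
    simp only [Finset.card_filter]
    push_cast
    refine Finset.sum_congr rfl fun k _ => ?_
    by_cases h : ∀ k', k' ≠ k → ¬ ((T k' ω - T k ω : Fin n)).val < L
    · rw [if_pos h, Set.indicator_of_mem (show ω ∈ A T L k from h)]
    · rw [if_neg h, Set.indicator_of_notMem (show ω ∉ A T L k from h)]
  have hMem : ∀ k, MemLp (Set.indicator (A T L k) (fun _ => (1:ℝ))) 2 μ := fun k =>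
    memLp_indicator_const 2 (measurableSet_A T hmeas k) 1 (Or.inr (measure_ne_top μ _))
  have hS2 : MemLp S 2 μ := by
    rw [hS_eq]; exact memLp_finset_sum Finset.univ (fun k _ => hMem k)
  -- single event probability, real form
  have hmA : ∀ k, (μ (A T L k)).toReal = pr := by
    intro k
    rw [meas_A hn hL hLn T hmeas hunif hind k, hpr]
    simp only [ENNReal.toReal_pow, ENNReal.toReal_mul, ENNReal.toReal_inv, ENNReal.toReal_natCast]
    rw [Nat.cast_sub hLn, div_eq_mul_inv]
  have hmAA : ∀ j k : Fin K, j ≠ k → (μ (A T L j ∩ A T L k)).toReal = qr := by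
    intro j k hjk
    rw [meas_AA hn hL h2L T hmeas hunif hind hjk, hqr]
    simp only [ENNReal.toReal_mul, ENNReal.toReal_pow, ENNReal.toReal_inv, ENNReal.toReal_natCast]
    have c1 : ((n - 2 * L : ℕ) : ℝ) = (n : ℝ) - 2 * L := by
      push_cast [h2L]; ring
    have c2 : ((n - 2 * L + 1 : ℕ) : ℝ) = (n : ℝ) - 2 * L + 1 := by
      push_cast [h2L]; ring
    rw [c1, c2]
    field_simp
  have hES : ∫ ω, S ω ∂μ = (K : ℝ) * pr := by
    rw [hS_eq, integral_finset_sum _ (fun k _ => (hMem k).integrable one_le_two)]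
    have : ∀ k : Fin K, ∫ ω, Set.indicator (A T L k) (fun _ => (1:ℝ)) ω ∂μ
        = (μ (A T L k)).toReal := by
      intro k
      rw [integral_indicator_const (1:ℝ) (measurableSet_A T hmeas k)]; simp; rfl
    rw [Finset.sum_congr rfl (fun k _ => (this k).trans (hmA k))]
    simp [Finset.sum_const, Finset.card_univ, mul_comm]
  have hES2 : ∫ ω, S ω ^ 2 ∂μ = (K : ℝ) * pr + (K : ℝ) * ((K : ℝ) - 1) * qr := by
    have hpt : ∀ ω, S ω ^ 2
        = ∑ j, ∑ k, Set.indicator (A T L j ∩ A T L k) (fun _ => (1:ℝ)) ω := by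
      intro ω
      rw [funext_iff.1 hS_eq ω, sq, Finset.sum_mul_sum]
      refine Finset.sum_congr rfl fun j _ => Finset.sum_congr rfl fun k _ => ?_
      by_cases h1 : ω ∈ A T L j <;> by_cases h2 : ω ∈ A T L k <;>
        simp [Set.indicator_apply, Set.mem_inter_iff, h1, h2]
    have hMemI : ∀ (j k : Fin K), MemLp
        (Set.indicator (A T L j ∩ A T L k) (fun _ => (1:ℝ))) 2 μ := fun j k =>
      memLp_indicator_const 2 ((measurableSet_A T hmeas j).inter (measurableSet_A T hmeas k)) 1
        (Or.inr (measure_ne_top μ _))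
    have hint : ∀ (j k : Fin K), ∫ ω,
        Set.indicator (A T L j ∩ A T L k) (fun _ => (1:ℝ)) ω ∂μ
        = (μ (A T L j ∩ A T L k)).toReal := by
      intro j k
      rw [integral_indicator_const (1:ℝ)
        ((measurableSet_A T hmeas j).inter (measurableSet_A T hmeas k))]; simp; rfl
    calc ∫ ω, S ω ^ 2 ∂μ
        = ∫ ω, ∑ j, ∑ k, Set.indicator (A T L j ∩ A T L k) (fun _ => (1:ℝ)) ω ∂μ := by
          simp_rw [hpt]
      _ = ∑ j, ∑ k, (μ (A T L j ∩ A T L k)).toReal := by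
          rw [integral_finset_sum _ (fun j _ => integrable_finset_sum _
            (fun k _ => (hMemI j k).integrable one_le_two))]
          refine Finset.sum_congr rfl fun j _ => ?_
          rw [integral_finset_sum _ (fun k _ => (hMemI j k).integrable one_le_two)]
          exact Finset.sum_congr rfl fun k _ => hint j k
      _ = ∑ j : Fin K, (pr + ((K : ℝ) - 1) * qr) := by
          refine Finset.sum_congr rfl fun j _ => ?_
          rw [← Finset.add_sum_erase Finset.univ _ (Finset.mem_univ j)]
          congr 1
          · rw [Set.inter_self]; exact hmA j
          · rw [Finset.sum_congr rfl (fun k hk => hmAA j k (Finset.ne_of_mem_erase hk).symm),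
              Finset.sum_const, Finset.card_erase_of_mem (Finset.mem_univ j),
              Finset.card_univ, Fintype.card_fin, nsmul_eq_mul]
            congr 1
            rw [Nat.cast_sub (by omega : 1 ≤ K)]; simp
      _ = (K : ℝ) * pr + (K : ℝ) * ((K : ℝ) - 1) * qr := by
          rw [Finset.sum_const, Finset.card_univ, Fintype.card_fin, nsmul_eq_mul]; ring
  -- bounds on pr, qr
  have hx01 : 0 ≤ ((n : ℝ) - L) / n ∧ ((n : ℝ) - L) / n ≤ 1 := by
    constructor
    · apply div_nonneg _ (Nat.cast_nonneg n)
      have : (L : ℝ) ≤ n := Nat.cast_le.2 hLn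
      linarith
    · rw [div_le_one (by positivity)]
      have : (0 : ℝ) ≤ L := Nat.cast_nonneg L
      linarith
  have hpr0 : 0 ≤ pr := pow_nonneg hx01.1 _
  have hpr1 : pr ≤ 1 := pow_le_one₀ hx01.1 hx01.2
  have hqr0 : 0 ≤ qr := by
    apply mul_nonneg
    · apply div_nonneg _ (Nat.cast_nonneg n)
      have : 2 * (L : ℝ) ≤ n := by
        have := Nat.cast_le (α := ℝ).2 h2L; push_cast at this; linarith
      linarith
    · apply pow_nonneg
      apply div_nonneg _ (Nat.cast_nonneg n)
      have : 2 * (L : ℝ) ≤ n := by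
        have := Nat.cast_le (α := ℝ).2 h2L; push_cast at this; linarith
      linarith
  -- variance bound
  have hVar : variance S μ ≤ (K : ℝ) + (K : ℝ) ^ 2 * |qr - pr ^ 2| := by
    have hv := variance_eq_sub hS2
    have hv2 : variance S μ = (∫ ω, S ω ^ 2 ∂μ) - (∫ ω, S ω ∂μ) ^ 2 := by
      rw [hv]; rfl
    rw [hv2, hES, hES2]
    have h3 : (K : ℝ) ^ 2 * (qr - pr ^ 2) ≤ (K : ℝ) ^ 2 * |qr - pr ^ 2| :=
      mul_le_mul_of_nonneg_left (le_abs_self _) (sq_nonneg _)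
    have h1 : (K : ℝ) * pr ≤ K := by
      nlinarith [Nat.cast_nonneg (α := ℝ) K]
    have h2 : 0 ≤ (K : ℝ) * qr := mul_nonneg (Nat.cast_nonneg K) hqr0
    nlinarith
  have hcheb := meas_ge_le_variance_div_sq (μ := μ) hS2 ha
  rw [hES] at hcheb
  refine le_trans (le_of_eq rfl) (le_trans hcheb ?_)
  · apply ENNReal.ofReal_le_ofReal
    gcongr



lemma explim {u : ℕ → ℝ} {m : ℕ → ℕ} {a : ℝ}
    (hu : Tendsto u atTop (nhds 0)) (hpos : ∀ᶠ n in atTop, 0 < u n)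
    (hlt : ∀ᶠ n in atTop, u n < 1)
    (hmu : Tendsto (fun n => (m n : ℝ) * u n) atTop (nhds a)) :
    Tendsto (fun n => (1 - u n) ^ (m n)) atTop (nhds (Real.exp (-a))) := by
  have hd : HasDerivAt (fun x : ℝ => Real.log (1 - x)) (-1) 0 := by
    have h1 : HasDerivAt (fun x : ℝ => 1 - x) (-1) 0 := (hasDerivAt_id 0).const_sub 1
    have h2 := (Real.hasDerivAt_log (by norm_num : (1:ℝ) - 0 ≠ 0)).comp 0 h1
    have h3 : HasDerivAt (fun x : ℝ => Real.log (1 - x)) ((1 - 0)⁻¹ * -1) 0 := h2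
    convert h3 using 1
    norm_num
  have hslope : Tendsto (fun x : ℝ => Real.log (1 - x) / x)
      (nhdsWithin 0 {(0:ℝ)}ᶜ) (nhds (-1)) := by
    have := hasDerivAt_iff_tendsto_slope.1 hd
    refine this.congr fun x => ?_
    rw [slope_def_field]
    norm_num
  have hu' : Tendsto u atTop (nhdsWithin 0 {(0:ℝ)}ᶜ) := by
    rw [tendsto_nhdsWithin_iff]
    exact ⟨hu, hpos.mono fun n hn => by simpa using hn.ne'⟩
  have hlog : Tendsto (fun n => (m n : ℝ) * Real.log (1 - u n)) atTop (nhds (a * -1)) := by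
    refine (hmu.mul (hslope.comp hu')).congr' ?_
    filter_upwards [hpos] with n hn
    have : u n ≠ 0 := hn.ne'
    simp only [Function.comp_apply]
    field_simp
  have hexp : Tendsto (fun n => Real.exp ((m n : ℝ) * Real.log (1 - u n))) atTop
      (nhds (Real.exp (-a))) := by
    have := (Real.continuous_exp.tendsto (a * -1)).comp hlog
    rw [mul_neg_one] at this
    exact this
  refine hexp.congr' ?_
  filter_upwards [hlt] with n hn
  have h1 : 0 < 1 - u n := by linarith
  rw [← Real.log_pow, Real.exp_log (pow_pos h1 _)]

noncomputable def Lnf (Lb : ℝ) (n : ℕ) : ℕ := ⌊Lb * Real.logb 2 (n:ℝ)⌋₊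
noncomputable def Knf (c Lb : ℝ) (n : ℕ) : ℕ := ⌊c * (n:ℝ) / (Lb * Real.logb 2 (n:ℝ))⌋₊

end Stmt13

open Stmt13 in
theorem stmt13 (c Lb : ℝ) (hc : 0 < c) (hL : 1 < Lb) (ε : ℝ) (hε : 0 < ε)
    (Ω : ℕ → Type) (mΩ : ∀ n, MeasurableSpace (Ω n))
    (μ : ∀ n, Measure (Ω n)) (hprob : ∀ n, IsProbabilityMeasure (μ n))
    (T : ∀ n : ℕ, Fin (⌊c * n / (Lb * Real.logb 2 n)⌋₊) → Ω n → Fin n)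
    (hmeas : ∀ n k, Measurable (T n k))
    (hunif : ∀ n, 0 < n → ∀ k (t : Fin n), μ n {ω | T n k ω = t} = (n : ENNReal)⁻¹)
    (hind : ∀ n, iIndepFun (T n) (μ n)) :
    Tendsto (fun n : ℕ =>
      μ n {ω | ε * (⌊c * n / (Lb * Real.logb 2 n)⌋₊ : ℝ) * Real.exp (-c) ≤
        |((Finset.univ.filter (fun k =>
            ∀ k', k' ≠ k → ¬ (T n k' ω - T n k ω : Fin n).val < ⌊Lb * Real.logb 2 n⌋₊)).card : ℝ) -
          (⌊c * n / (Lb * Real.logb 2 n)⌋₊ : ℝ) * Real.exp (-c)|})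
      atTop (nhds 0) := by
  have hlog2 : (0:ℝ) < Real.log 2 := Real.log_pos (by norm_num)
  have hLb0 : (0:ℝ) < Lb := lt_trans one_pos hL
  have he' : (0:ℝ) < Real.exp (-c) := Real.exp_pos _
  set ℓ : ℕ → ℝ := fun n : ℕ => Lb * Real.logb 2 (n:ℝ) with hℓdef
  -- basic limits
  have hlogb_nat : Tendsto (fun n : ℕ => Real.logb 2 (n:ℝ)) atTop atTop :=
    (tendsto_logb_atTop (by norm_num)).comp tendsto_natCast_atTop_atTop
  have hltop : Tendsto ℓ atTop atTop := hlogb_nat.const_mul_atTop hLb0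
  have hlognn : Tendsto (fun n : ℕ => Real.log n / n) atTop (nhds 0) := by
    have h1 := Real.tendsto_pow_log_div_mul_add_atTop 1 0 1 one_ne_zero
    have h2 : Tendsto (fun x : ℝ => Real.log x / x) atTop (nhds 0) := by simpa using h1
    exact h2.comp tendsto_natCast_atTop_atTop
  have hldiv : Tendsto (fun n : ℕ => ℓ n / n) atTop (nhds 0) := by
    have h := hlognn.const_mul (Lb / Real.log 2)
    rw [mul_zero] at h
    refine h.congr fun n : ℕ => ?_
    rw [hℓdef]
    simp only [Real.logb]
    field_simp
  have hLdiv : Tendsto (fun n : ℕ => (Lnf Lb n : ℝ) / n) atTop (nhds 0) := by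
    refine tendsto_of_tendsto_of_tendsto_of_le_of_le' tendsto_const_nhds hldiv ?_ ?_
    · filter_upwards [eventually_gt_atTop 0] with n hn
      positivity
    · filter_upwards [hltop.eventually_ge_atTop 0, eventually_gt_atTop 0] with n h0 hn
      have hnR : (0:ℝ) < n := by exact_mod_cast hn
      gcongr
      exact Nat.floor_le h0
  have hcn : Tendsto (fun n : ℕ => c * n / ℓ n) atTop atTop := by
    have hinv : Tendsto (fun n : ℕ => (Real.log n / n)⁻¹) atTop atTop := by
      refine Tendsto.inv_tendsto_nhdsGT_zero ?_
      rw [tendsto_nhdsWithin_iff]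
      refine ⟨hlognn, ?_⟩
      filter_upwards [eventually_ge_atTop 2] with n hn
      have h2 : (2:ℝ) ≤ n := by exact_mod_cast hn
      have hlogn : 0 < Real.log n := Real.log_pos (by linarith)
      have hn0 : (0:ℝ) < n := by linarith
      exact Set.mem_Ioi.2 (by positivity)
    have h := hinv.const_mul_atTop (show (0:ℝ) < c * Real.log 2 / Lb by positivity)
    refine h.congr' ?_
    filter_upwards [eventually_ge_atTop 2] with n hn
    have h2 : (2:ℝ) ≤ n := by exact_mod_cast hn
    have hlogn : 0 < Real.log n := Real.log_pos (by linarith)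
    rw [hℓdef]
    simp only [Real.logb]
    field_simp
  have hKtop : Tendsto (fun n : ℕ => Knf c Lb n) atTop atTop := by
    exact tendsto_nat_floor_atTop (α := ℝ) |>.comp hcn
  have hKR : Tendsto (fun n : ℕ => (Knf c Lb n : ℝ)) atTop atTop :=
    tendsto_natCast_atTop_atTop.comp hKtop
  -- K*L/n → c
  have hKL : Tendsto (fun n : ℕ => (Knf c Lb n : ℝ) * (Lnf Lb n) / n) atTop (nhds c) := by
    have hcl : Tendsto (fun n : ℕ => c / ℓ n) atTop (nhds 0) := by
      have h := hltop.inv_tendsto_atTop.const_mul c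
      rw [mul_zero] at h
      refine h.congr fun n : ℕ => ?_
      simp [Pi.inv_apply, div_eq_mul_inv]
    have hlower : Tendsto (fun n : ℕ => c - c / ℓ n - ℓ n / n) atTop (nhds c) := by
      have := (tendsto_const_nhds (x := c) (f := atTop)).sub hcl |>.sub hldiv
      simpa using this
    refine tendsto_of_tendsto_of_tendsto_of_le_of_le' hlower tendsto_const_nhds ?_ ?_
    · filter_upwards [hltop.eventually_ge_atTop 1, hcn.eventually_ge_atTop 1,
        eventually_gt_atTop 0] with n hl1 hc1 hn0
      have hnR : (0:ℝ) < n := by exact_mod_cast hn0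
      have hl0 : (0:ℝ) < ℓ n := by linarith
      have hK1 : c * n / ℓ n - 1 ≤ (Knf c Lb n : ℝ) :=
        le_of_lt (Nat.sub_one_lt_floor (c * n / ℓ n))
      have hL1 : ℓ n - 1 ≤ (Lnf Lb n : ℝ) := le_of_lt (Nat.sub_one_lt_floor (ℓ n))
      have hprod : (c * n / ℓ n - 1) * (ℓ n - 1) ≤ (Knf c Lb n : ℝ) * (Lnf Lb n) :=
        mul_le_mul hK1 hL1 (by linarith) (Nat.cast_nonneg _)
      have hexp : (c * n / ℓ n - 1) * (ℓ n - 1) / n = c - c / ℓ n - ℓ n / n + 1 / n := by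
        field_simp
        ring
      have h1n : (0:ℝ) ≤ 1 / n := by positivity
      calc c - c / ℓ n - ℓ n / n ≤ (c * n / ℓ n - 1) * (ℓ n - 1) / n := by
            rw [hexp]; linarith
        _ ≤ (Knf c Lb n : ℝ) * (Lnf Lb n) / n := by gcongr
    · filter_upwards [hltop.eventually_gt_atTop 0, eventually_gt_atTop 0] with n hl0 hn0
      have hnR : (0:ℝ) < n := by exact_mod_cast hn0
      have hKle : (Knf c Lb n : ℝ) ≤ c * n / ℓ n := Nat.floor_le (by positivity)
      have hLle : (Lnf Lb n : ℝ) ≤ ℓ n := Nat.floor_le (by positivity)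
      have heq : (c * n / ℓ n) * ℓ n = c * n := by field_simp
      calc (Knf c Lb n : ℝ) * Lnf Lb n / n ≤ (c * n / ℓ n) * ℓ n / n := by
            gcongr
        _ = c := by rw [heq]; field_simp
  -- eventual positivity facts
  have hLn1 : ∀ᶠ n : ℕ in atTop, 1 ≤ Lnf Lb n := by
    filter_upwards [hltop.eventually_ge_atTop 1] with n h1
    exact Nat.le_floor (by exact_mod_cast h1)
  have hKn2 : ∀ᶠ n : ℕ in atTop, 2 ≤ Knf c Lb n := hKtop.eventually_ge_atTop 2
  have hLpos : ∀ᶠ n : ℕ in atTop, 0 < (Lnf Lb n : ℝ) / n := by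
    filter_upwards [hLn1, eventually_gt_atTop 0] with n h1 h0
    have hnR : (0:ℝ) < n := by exact_mod_cast h0
    have hLR : (0:ℝ) < (Lnf Lb n : ℝ) := by exact_mod_cast h1
    positivity
  have hLlt1 : ∀ᶠ n : ℕ in atTop, (Lnf Lb n : ℝ) / n < 1 :=
    hLdiv.eventually_lt_const one_pos
  have h2Ln : ∀ᶠ n : ℕ in atTop, 2 * Lnf Lb n ≤ n := by
    filter_upwards [hLdiv.eventually_lt_const (show (0:ℝ) < 1/2 by norm_num),
      eventually_gt_atTop 0] with n hhalf h0
    have hnR : (0:ℝ) < n := by exact_mod_cast h0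
    have h1 : (Lnf Lb n : ℝ) < n / 2 := by
      rw [div_lt_iff₀ hnR] at hhalf
      linarith
    have h2 : (2 * Lnf Lb n : ℝ) ≤ n := by push_cast; linarith
    exact_mod_cast h2
  -- p limit
  have hmu1 : Tendsto (fun n : ℕ => ((Knf c Lb n - 1 : ℕ) : ℝ) * ((Lnf Lb n : ℝ) / n))
      atTop (nhds c) := by
    have base := hKL.sub hLdiv
    rw [sub_zero] at base
    refine base.congr' ?_
    filter_upwards [hKn2] with n hK2
    have hc1 : ((Knf c Lb n - 1 : ℕ) : ℝ) = (Knf c Lb n : ℝ) - 1 := by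
      rw [Nat.cast_sub (by omega)]; norm_num
    rw [hc1]
    ring
  have hp : Tendsto (fun n : ℕ => (((n:ℝ) - (Lnf Lb n : ℝ)) / n) ^ (Knf c Lb n - 1)) atTop
      (nhds (Real.exp (-c))) := by
    have h := explim hLdiv hLpos hLlt1 hmu1
    refine h.congr' ?_
    filter_upwards [eventually_gt_atTop 0] with n h0
    have hnR : (0:ℝ) < n := by exact_mod_cast h0
    have heq : 1 - (Lnf Lb n : ℝ) / n = ((n:ℝ) - (Lnf Lb n : ℝ)) / n := by field_simp
    rw [heq]
  -- q limit
  have hLdiv2 : Tendsto (fun n : ℕ => 2 * ((Lnf Lb n : ℝ) / n)) atTop (nhds 0) := by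
    have := hLdiv.const_mul 2
    rw [mul_zero] at this
    exact this
  have h2pos : ∀ᶠ n : ℕ in atTop, 0 < 2 * ((Lnf Lb n : ℝ) / n) := by
    filter_upwards [hLpos] with n h; linarith
  have h2lt1 : ∀ᶠ n : ℕ in atTop, 2 * ((Lnf Lb n : ℝ) / n) < 1 :=
    hLdiv2.eventually_lt_const one_pos
  have hmu2 : Tendsto (fun n : ℕ => ((Knf c Lb n - 2 : ℕ) : ℝ) * (2 * ((Lnf Lb n : ℝ) / n)))
      atTop (nhds (2 * c)) := by
    have base := (hKL.const_mul 2).sub (hLdiv.const_mul 4)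
    rw [mul_zero, sub_zero] at base
    refine base.congr' ?_
    filter_upwards [hKn2] with n hK2
    have hc1 : ((Knf c Lb n - 2 : ℕ) : ℝ) = (Knf c Lb n : ℝ) - 2 := by
      rw [Nat.cast_sub (by omega)]; norm_num
    rw [hc1]
    ring
  have hfac2 : Tendsto (fun n : ℕ => (((n:ℝ) - 2 * (Lnf Lb n : ℝ)) / n) ^ (Knf c Lb n - 2)) atTop
      (nhds (Real.exp (-(2*c)))) := by
    have h := explim hLdiv2 h2pos h2lt1 hmu2
    refine h.congr' ?_
    filter_upwards [eventually_gt_atTop 0] with n h0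
    have hnR : (0:ℝ) < n := by exact_mod_cast h0
    have heq : 1 - 2 * ((Lnf Lb n : ℝ) / n) = ((n:ℝ) - 2 * (Lnf Lb n : ℝ)) / n := by field_simp
    rw [heq]
  have hfac1 : Tendsto (fun n : ℕ => ((n:ℝ) - 2 * (Lnf Lb n : ℝ) + 1) / n) atTop (nhds 1) := by
    have base := ((tendsto_const_nhds (x := (1:ℝ)) (f := atTop)).sub hLdiv2).add
      tendsto_one_div_atTop_nhds_zero_nat
    rw [sub_zero, add_zero] at base
    refine base.congr' ?_
    filter_upwards [eventually_gt_atTop 0] with n h0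
    have hnR : (0:ℝ) < n := by exact_mod_cast h0
    field_simp
  have hq : Tendsto (fun n : ℕ => ((n:ℝ) - 2 * (Lnf Lb n : ℝ) + 1) / n
      * (((n:ℝ) - 2 * (Lnf Lb n : ℝ)) / n) ^ (Knf c Lb n - 2)) atTop
      (nhds (Real.exp (-(2*c)))) := by
    have := hfac1.mul hfac2
    rw [one_mul] at this
    exact this
  -- |q - p^2| → 0
  have hD : Tendsto (fun n : ℕ => |((n:ℝ) - 2 * (Lnf Lb n : ℝ) + 1) / n
      * (((n:ℝ) - 2 * (Lnf Lb n : ℝ)) / n) ^ (Knf c Lb n - 2)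
      - ((((n:ℝ) - (Lnf Lb n : ℝ)) / n) ^ (Knf c Lb n - 1)) ^ 2|) atTop (nhds 0) := by
    have hsq : Tendsto (fun n : ℕ => ((((n:ℝ) - (Lnf Lb n : ℝ)) / n) ^ (Knf c Lb n - 1)) ^ 2)
        atTop (nhds (Real.exp (-(2*c)))) := by
      have h := hp.pow 2
      have he : Real.exp (-c) ^ 2 = Real.exp (-(2*c)) := by
        rw [← Real.exp_nat_mul]; norm_num
      rwa [he] at h
    have := (hq.sub hsq).abs
    rw [sub_self, abs_zero] at this
    exact this
  -- closeness of p to exp(-c)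
  have hpclose : ∀ᶠ n : ℕ in atTop,
      |(((n:ℝ) - (Lnf Lb n : ℝ)) / n) ^ (Knf c Lb n - 1) - Real.exp (-c)|
        ≤ ε/2 * Real.exp (-c) := by
    have h0 : Tendsto (fun n : ℕ =>
        |(((n:ℝ) - (Lnf Lb n : ℝ)) / n) ^ (Knf c Lb n - 1) - Real.exp (-c)|)
        atTop (nhds 0) := by
      have := (hp.sub (tendsto_const_nhds (x := Real.exp (-c)))).abs
      rw [sub_self, abs_zero] at this
      exact this
    exact (h0.eventually_lt_const (by positivity)).mono fun n h => h.le
  -- the bound sequence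
  have hB : Tendsto (fun n : ℕ => (((Knf c Lb n : ℝ) + (Knf c Lb n : ℝ) ^ 2
      * |((n:ℝ) - 2 * (Lnf Lb n : ℝ) + 1) / n
        * (((n:ℝ) - 2 * (Lnf Lb n : ℝ)) / n) ^ (Knf c Lb n - 2)
        - ((((n:ℝ) - (Lnf Lb n : ℝ)) / n) ^ (Knf c Lb n - 1)) ^ 2|)
      / (ε/2 * ((Knf c Lb n : ℝ) * Real.exp (-c))) ^ 2)) atTop (nhds 0) := by
    have base := ((hKR.inv_tendsto_atTop).add hD).mul_const ((ε/2 * Real.exp (-c)) ^ 2)⁻¹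
    rw [add_zero, zero_mul] at base
    refine base.congr' ?_
    filter_upwards [hKn2] with n hK2
    have hKpos : (0:ℝ) < (Knf c Lb n : ℝ) := by
      have : (0:ℕ) < Knf c Lb n := by omega
      exact_mod_cast this
    have hεe : (0:ℝ) < ε/2 * Real.exp (-c) := by positivity
    have key : ∀ (k d e : ℝ), 0 < k → 0 < e →
        (k⁻¹ + d) * ((e)^2)⁻¹ = (k + k^2*d)/(e*k)^2 := by
      intro k d e hk he0; field_simp
    simp only [Pi.inv_apply]
    rw [show (ε/2 * ((Knf c Lb n : ℝ) * Real.exp (-c)))^2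
      = ((ε/2 * Real.exp (-c)) * (Knf c Lb n : ℝ))^2 from by ring]
    exact key _ _ _ hKpos hεe
  -- generic triangle step
  have key2 : ∀ (S Kr pv ee : ℝ), 0 ≤ Kr → 0 < ee →
      |pv - ee| ≤ ε/2 * ee → ε * Kr * ee ≤ |S - Kr * ee| →
      ε/2 * (Kr * ee) ≤ |S - Kr * pv| := by
    intro S Kr pv ee hKr hee hpv hS
    have htri : |S - Kr * ee| ≤ |S - Kr * pv| + |Kr * pv - Kr * ee| := abs_sub_le _ _ _
    have hbd : |Kr * pv - Kr * ee| ≤ ε/2 * (Kr * ee) := by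
      rw [← mul_sub, abs_mul, abs_of_nonneg hKr]
      calc Kr * |pv - ee| ≤ Kr * (ε/2 * ee) := mul_le_mul_of_nonneg_left hpv hKr
        _ = ε/2 * (Kr * ee) := by ring
    have hS' : 2 * (ε/2 * (Kr * ee)) ≤ |S - Kr * ee| := by
      have h : ε * Kr * ee = 2 * (ε/2 * (Kr * ee)) := by ring
      rw [← h]; exact hS
    linarith
  -- final squeeze
  refine tendsto_of_tendsto_of_tendsto_of_le_of_le' (g := fun _ => (0:ENNReal))
    (h := fun n : ℕ => ENNReal.ofReal (((Knf c Lb n : ℝ) + (Knf c Lb n : ℝ) ^ 2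
      * |((n:ℝ) - 2 * (Lnf Lb n : ℝ) + 1) / n
        * (((n:ℝ) - 2 * (Lnf Lb n : ℝ)) / n) ^ (Knf c Lb n - 2)
        - ((((n:ℝ) - (Lnf Lb n : ℝ)) / n) ^ (Knf c Lb n - 1)) ^ 2|)
      / (ε/2 * ((Knf c Lb n : ℝ) * Real.exp (-c))) ^ 2))
    tendsto_const_nhds ?_ (Eventually.of_forall fun n => zero_le) ?_
  · have := ENNReal.tendsto_ofReal hB
    rwa [ENNReal.ofReal_zero] at this
  · filter_upwards [eventually_gt_atTop 0, hLn1, h2Ln, hKn2, hpclose] with n hn0 hL1 h2L hK2 hpc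
    haveI := hprob n
    have hKpos : (0:ℝ) < (Knf c Lb n : ℝ) := by
      have : (0:ℕ) < Knf c Lb n := by omega
      exact_mod_cast this
    refine le_trans (measure_mono ?_)
      (core (K := Knf c Lb n) (L := Lnf Lb n) hn0 (by omega) h2L hK2 (T n) (hmeas n)
        (hunif n hn0) (hind n)
        (ε/2 * ((Knf c Lb n : ℝ) * Real.exp (-c)))
        (mul_pos (by positivity) (mul_pos hKpos he')))
    intro ω hω
    simp only [Set.mem_setOf_eq] at hω ⊢
    refine key2 _ _ _ _ (Nat.cast_nonneg _) he' hpc ?_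
    exact hω
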